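/- Tensor-product additivity of UDA states with one pure factor: let α = |ψ⟩⟨ψ| be a pure k-UDA state on H_{A_1} ⊗ ... ⊗ H_{A_m} and β a (possibly mixed) k-UDA state on H_{B_1} ⊗ ... ⊗ H_{B_n}. Then the (m+n)-partite state α ⊗ β on H_{A_1} ⊗ ... ⊗ H_{A_m} ⊗ H_{B_1} ⊗ ... ⊗ H_{B_n} is k-UDA: any (m+n)-partite density operator sharing all k-partite marginals of α ⊗ β equals α ⊗ β. -/

import Mathlib

set_option linter.unusedSectionVars false


open scoped BigOperators ComplexOrder

abbrev Idx {ι : Type} (κ : ι → Type) : Type := ∀ i, κ i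

def IsDensity {α : Type} [Fintype α] (M : Matrix α α ℂ) : Prop :=
  M.PosSemidef ∧ M.trace = 1

def pureState {α : Type} (ψ : α → ℂ) : Matrix α α ℂ :=
  fun a b => ψ a * star (ψ b)

noncomputable def ptrace {ι : Type} [Fintype ι] [DecidableEq ι] (κ : ι → Type)
    [∀ i, Fintype (κ i)] (S : Finset ι) (M : Matrix (Idx κ) (Idx κ) ℂ) :
    Matrix (∀ i : {i // i ∈ S}, κ i) (∀ i : {i // i ∈ S}, κ i) ℂ :=
  fun a b => ∑ c : ∀ i : {i // i ∉ S}, κ i,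
    M (fun i => if h : i ∈ S then a ⟨i, h⟩ else c ⟨i, h⟩)
      (fun i => if h : i ∈ S then b ⟨i, h⟩ else c ⟨i, h⟩)

def IsUDA {ι : Type} [Fintype ι] [DecidableEq ι] (κ : ι → Type)
    [∀ i, Fintype (κ i)] (k : ℕ) (ρ : Matrix (Idx κ) (Idx κ) ℂ) : Prop :=
  ∀ σ : Matrix (Idx κ) (Idx κ) ℂ, IsDensity σ →
    (∀ S : Finset ι, S.card = k → ptrace κ S σ = ptrace κ S ρ) → σ = ρ

instance sumElimFintype {ι₁ ι₂ : Type} {κ₁ : ι₁ → Type} {κ₂ : ι₂ → Type}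
    [∀ i, Fintype (κ₁ i)] [∀ i, Fintype (κ₂ i)] :
    ∀ i, Fintype (Sum.elim κ₁ κ₂ i)
  | .inl i => inferInstanceAs (Fintype (κ₁ i))
  | .inr i => inferInstanceAs (Fintype (κ₂ i))

def tensProd {ι₁ ι₂ : Type} {κ₁ : ι₁ → Type} {κ₂ : ι₂ → Type}
    (ρ : Matrix (Idx κ₁) (Idx κ₁) ℂ) (σ : Matrix (Idx κ₂) (Idx κ₂) ℂ) :
    Matrix (Idx (Sum.elim κ₁ κ₂)) (Idx (Sum.elim κ₁ κ₂)) ℂ :=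
  fun a b => ρ (fun i => a (.inl i)) (fun i => b (.inl i)) *
             σ (fun i => a (.inr i)) (fun i => b (.inr i))

namespace TAux
open Matrix
variable {ι₁ ι₂ : Type} {κ₁ : ι₁ → Type} {κ₂ : ι₂ → Type}
def glue (a : Idx κ₁) (b : Idx κ₂) : Idx (Sum.elim κ₁ κ₂)
  | .inl i => a i
  | .inr j => b j
def glueEquiv : (Idx κ₁ × Idx κ₂) ≃ Idx (Sum.elim κ₁ κ₂) where
  toFun p := glue p.1 p.2
  invFun u := (fun i => u (.inl i), fun j => u (.inr j))
  left_inv p := rfl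
  right_inv u := by funext i; cases i <;> rfl
variable [Fintype ι₁] [Fintype ι₂] [DecidableEq ι₁] [DecidableEq ι₂]
  [∀ i, Fintype (κ₁ i)] [∀ i, Fintype (κ₂ i)]
lemma sum_glue {M : Type} [AddCommMonoid M] (f : Idx (Sum.elim κ₁ κ₂) → M) :
    ∑ u, f u = ∑ a : Idx κ₁, ∑ b : Idx κ₂, f (glue a b) := by
  rw [← Equiv.sum_comp (glueEquiv (κ₁ := κ₁) (κ₂ := κ₂)) f, Fintype.sum_prod_type]
  rfl

lemma psd_exists {α : Type} [Fintype α] {M : Matrix α α ℂ} (hM : M.PosSemidef) :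
    ∃ B : Matrix α α ℂ, M = Bᴴ * B := by
  classical
  open scoped MatrixOrder in
  obtain ⟨B, rfl⟩ := CStarAlgebra.nonneg_iff_eq_star_mul_self.mp hM.nonneg
  exact ⟨B, rfl⟩

noncomputable def ptrA (M : Matrix (Idx (Sum.elim κ₁ κ₂)) (Idx (Sum.elim κ₁ κ₂)) ℂ) :
    Matrix (Idx κ₁) (Idx κ₁) ℂ :=
  fun a b => ∑ d : Idx κ₂, M (glue a d) (glue b d)

noncomputable def ptrB (M : Matrix (Idx (Sum.elim κ₁ κ₂)) (Idx (Sum.elim κ₁ κ₂)) ℂ) :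
    Matrix (Idx κ₂) (Idx κ₂) ℂ :=
  fun c d => ∑ a : Idx κ₁, M (glue a c) (glue a d)

lemma trace_ptrA (M : Matrix (Idx (Sum.elim κ₁ κ₂)) (Idx (Sum.elim κ₁ κ₂)) ℂ) :
    (ptrA M).trace = M.trace := by
  simp only [Matrix.trace, Matrix.diag, ptrA]
  rw [sum_glue (fun u => M u u)]

lemma glue_inl (a : Idx κ₁) (b : Idx κ₂) : (fun i => glue a b (.inl i)) = a := rfl
lemma glue_inr (a : Idx κ₁) (b : Idx κ₂) : (fun j => glue a b (.inr j)) = b := rfl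

lemma tensProd_glue (ρ : Matrix (Idx κ₁) (Idx κ₁) ℂ) (τ : Matrix (Idx κ₂) (Idx κ₂) ℂ)
    (a b : Idx κ₁) (c d : Idx κ₂) :
    tensProd ρ τ (glue a c) (glue b d) = ρ a b * τ c d := rfl

lemma trace_tensProd (ρ : Matrix (Idx κ₁) (Idx κ₁) ℂ) (τ : Matrix (Idx κ₂) (Idx κ₂) ℂ) :
    (tensProd ρ τ).trace = ρ.trace * τ.trace := by
  simp only [Matrix.trace, Matrix.diag]
  rw [sum_glue (fun u => tensProd ρ τ u u)]
  simp only [tensProd_glue, ← Finset.mul_sum, ← Finset.sum_mul]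

lemma ptrA_tensProd (ρ : Matrix (Idx κ₁) (Idx κ₁) ℂ) (τ : Matrix (Idx κ₂) (Idx κ₂) ℂ) :
    ptrA (tensProd ρ τ) = τ.trace • ρ := by
  funext a b
  simp only [ptrA, tensProd_glue, Matrix.smul_apply, Matrix.trace, Matrix.diag, smul_eq_mul]
  rw [← Finset.mul_sum, mul_comm]

lemma ptrB_tensProd (ρ : Matrix (Idx κ₁) (Idx κ₁) ℂ) (τ : Matrix (Idx κ₂) (Idx κ₂) ℂ) :
    ptrB (tensProd ρ τ) = ρ.trace • τ := by
  funext c d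
  simp only [ptrB, tensProd_glue, Matrix.smul_apply, Matrix.trace, Matrix.diag, smul_eq_mul]
  rw [← Finset.sum_mul]

lemma ptrA_posSemidef {M : Matrix (Idx (Sum.elim κ₁ κ₂)) (Idx (Sum.elim κ₁ κ₂)) ℂ}
    (hM : M.PosSemidef) : (ptrA M).PosSemidef := by
  obtain ⟨B, rfl⟩ := psd_exists hM
  set C : Matrix (Idx (Sum.elim κ₁ κ₂) × Idx κ₂) (Idx κ₁) ℂ :=
    Matrix.of fun p a => B p.1 (glue a p.2) with hC
  have : ptrA (Bᴴ * B) = Cᴴ * C := by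
    funext a b
    simp only [ptrA, Matrix.mul_apply, Matrix.conjTranspose_apply, Matrix.of_apply]
    rw [Fintype.sum_prod_type]
    exact Finset.sum_comm
  rw [this]
  exact Matrix.posSemidef_conjTranspose_mul_self _

def padl (S : Finset ι₁) (a : ∀ j : {j // j ∈ S}, κ₁ j) :
    ∀ i : {i // i ∈ S.map (Function.Embedding.inl (β := ι₂))}, Sum.elim κ₁ κ₂ i
  | ⟨.inl j, h⟩ => a ⟨j, by simpa using h⟩
  | ⟨.inr j, h⟩ => absurd h (by simp)

def padr (T : Finset ι₂) (b : ∀ j : {j // j ∈ T}, κ₂ j) :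
    ∀ i : {i // i ∈ T.map (Function.Embedding.inr (α := ι₁))}, Sum.elim κ₁ κ₂ i
  | ⟨.inl j, h⟩ => absurd h (by simp)
  | ⟨.inr j, h⟩ => b ⟨j, by simpa using h⟩

def cpadlEquiv (S : Finset ι₁) :
    ((∀ j : {j // j ∉ S}, κ₁ j) × Idx κ₂) ≃
      (∀ i : {i // i ∉ S.map (Function.Embedding.inl (β := ι₂))}, Sum.elim κ₁ κ₂ i) where
  toFun p := fun i => match i with
    | ⟨.inl j, h⟩ => p.1 ⟨j, by simpa using h⟩
    | ⟨.inr j, _⟩ => p.2 j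
  invFun c := (fun j => c ⟨.inl j.1, by simpa using j.2⟩, fun j => c ⟨.inr j, by simp⟩)
  left_inv p := rfl
  right_inv c := by funext i; rcases i with ⟨i | i, h⟩ <;> rfl

def cpadrEquiv (T : Finset ι₂) :
    (Idx κ₁ × (∀ j : {j // j ∉ T}, κ₂ j)) ≃
      (∀ i : {i // i ∉ T.map (Function.Embedding.inr (α := ι₁))}, Sum.elim κ₁ κ₂ i) where
  toFun p := fun i => match i with
    | ⟨.inl j, _⟩ => p.1 j
    | ⟨.inr j, h⟩ => p.2 ⟨j, by simpa using h⟩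
  invFun c := (fun j => c ⟨.inl j, by simp⟩, fun j => c ⟨.inr j.1, by simpa using j.2⟩)
  left_inv p := rfl
  right_inv c := by funext i; rcases i with ⟨i | i, h⟩ <;> rfl

lemma ptrace_ptrA (S : Finset ι₁) (M : Matrix (Idx (Sum.elim κ₁ κ₂)) (Idx (Sum.elim κ₁ κ₂)) ℂ) :
    ptrace κ₁ S (ptrA M) = fun a b =>
      ptrace (Sum.elim κ₁ κ₂) (S.map (Function.Embedding.inl)) M (padl S a) (padl S b) := by
  funext a b
  simp only [ptrace, ptrA]
  rw [← Equiv.sum_comp (cpadlEquiv (κ₁ := κ₁) (κ₂ := κ₂) S), Fintype.sum_prod_type]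
  refine Finset.sum_congr rfl fun c _ => Finset.sum_congr rfl fun d _ => ?_
  congr 1 <;>
  · funext i
    rcases i with i | i
    · by_cases hi : i ∈ S
      · have h' : Sum.inl i ∈ S.map (Function.Embedding.inl (β := ι₂)) := by simpa using hi
        rw [dif_pos h']
        exact dif_pos hi
      · have h' : Sum.inl i ∉ S.map (Function.Embedding.inl (β := ι₂)) := by simpa using hi
        rw [dif_neg h']
        exact dif_neg hi
    · have h' : Sum.inr i ∉ S.map (Function.Embedding.inl (β := ι₂)) := by simp
      rw [dif_neg h']
      rfl

lemma ptrace_ptrB (T : Finset ι₂) (M : Matrix (Idx (Sum.elim κ₁ κ₂)) (Idx (Sum.elim κ₁ κ₂)) ℂ) :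
    ptrace κ₂ T (ptrB M) = fun a b =>
      ptrace (Sum.elim κ₁ κ₂) (T.map (Function.Embedding.inr)) M (padr T a) (padr T b) := by
  funext a b
  simp only [ptrace, ptrB]
  rw [← Equiv.sum_comp (cpadrEquiv (κ₁ := κ₁) (κ₂ := κ₂) T), Fintype.sum_prod_type]
  rw [Finset.sum_comm]
  refine Finset.sum_congr rfl fun c _ => Finset.sum_congr rfl fun d _ => ?_
  congr 1 <;>
  · funext i
    rcases i with i | i
    · have h' : Sum.inl i ∉ T.map (Function.Embedding.inr (α := ι₁)) := by simp
      rw [dif_neg h']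
      rfl
    · by_cases hi : i ∈ T
      · have h' : Sum.inr i ∈ T.map (Function.Embedding.inr (α := ι₁)) := by simpa using hi
        rw [dif_pos h']
        exact dif_pos hi
      · have h' : Sum.inr i ∉ T.map (Function.Embedding.inr (α := ι₁)) := by simpa using hi
        rw [dif_neg h']
        exact dif_neg hi

lemma sum_swap3 {M : Type} [AddCommMonoid M] {A B C : Type} [Fintype A] [Fintype B] [Fintype C]
    (f : A → B → C → M) :
    (∑ a, ∑ b, ∑ c, f a b c) = ∑ c, ∑ a, ∑ b, f a b c :=
  (Finset.sum_congr rfl fun _ _ => Finset.sum_comm).trans Finset.sum_comm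

lemma trace_conj_self_eq_zero {α : Type} [Fintype α] {X : Matrix α α ℂ}
    (h : (Xᴴ * X).trace = 0) : X = 0 := by
  have h1 : ((∑ v, ∑ u, Complex.normSq (X u v) : ℝ) : ℂ) = 0 := by
    rw [← h]
    simp only [Matrix.trace, Matrix.diag, Matrix.mul_apply, Matrix.conjTranspose_apply]
    push_cast
    refine Finset.sum_congr rfl fun v _ => Finset.sum_congr rfl fun u _ => ?_
    rw [Complex.star_def, mul_comm, Complex.mul_conj]
  rw [Complex.ofReal_eq_zero] at h1
  have h2 := (Finset.sum_eq_zero_iff_of_nonneg (fun v _ =>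
    Finset.sum_nonneg fun u _ => Complex.normSq_nonneg _)).mp h1
  funext u v
  have h3 := (Finset.sum_eq_zero_iff_of_nonneg (fun u _ => Complex.normSq_nonneg _)).mp
    (h2 v (Finset.mem_univ v)) u (Finset.mem_univ u)
  simpa using Complex.normSq_eq_zero.mp h3

lemma ext_glue {M N : Matrix (Idx (Sum.elim κ₁ κ₂)) (Idx (Sum.elim κ₁ κ₂)) ℂ}
    (h : ∀ a c b d, M (glue a c) (glue b d) = N (glue a c) (glue b d)) : M = N := by
  funext u v
  rw [← (glueEquiv (κ₁ := κ₁) (κ₂ := κ₂)).right_inv u,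
      ← (glueEquiv (κ₁ := κ₁) (κ₂ := κ₂)).right_inv v]
  exact h _ _ _ _

noncomputable def keyγ (ψ : Idx κ₁ → ℂ)
    (σ : Matrix (Idx (Sum.elim κ₁ κ₂)) (Idx (Sum.elim κ₁ κ₂)) ℂ) :
    Matrix (Idx κ₂) (Idx κ₂) ℂ :=
  fun c d => ∑ a : Idx κ₁, ∑ b : Idx κ₁, star (ψ a) * σ (glue a c) (glue b d) * ψ b

lemma keyγ_posSemidef (ψ : Idx κ₁ → ℂ)
    {σ : Matrix (Idx (Sum.elim κ₁ κ₂)) (Idx (Sum.elim κ₁ κ₂)) ℂ}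
    (hσ : σ.PosSemidef) : (keyγ ψ σ).PosSemidef := by
  obtain ⟨B, rfl⟩ := psd_exists hσ
  set D : Matrix (Idx (Sum.elim κ₁ κ₂)) (Idx κ₂) ℂ :=
    Matrix.of fun u c => ∑ a, B u (glue a c) * ψ a with hD
  have : keyγ ψ (Bᴴ * B) = Dᴴ * D := by
    funext c d
    simp only [keyγ, Matrix.mul_apply, Matrix.conjTranspose_apply, Matrix.of_apply, hD,
      star_sum, star_mul', Finset.sum_mul, Finset.mul_sum]
    rw [sum_swap3 (fun a b u => star (ψ a) * (star (B u (glue a c)) * B u (glue b d)) * ψ b)]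
    refine Finset.sum_congr rfl fun u _ => ?_
    rw [Finset.sum_comm]
    exact Finset.sum_congr rfl fun a _ => Finset.sum_congr rfl fun b _ => by ring
  rw [this]
  exact Matrix.posSemidef_conjTranspose_mul_self _

lemma pure_factor (ψ : Idx κ₁ → ℂ) (hψ : ∑ a, ψ a * star (ψ a) = 1)
    {σ : Matrix (Idx (Sum.elim κ₁ κ₂)) (Idx (Sum.elim κ₁ κ₂)) ℂ}
    (hσ : σ.PosSemidef) (htr : σ.trace = 1)
    (hA : ptrA σ = fun a b => ψ a * star (ψ b)) :
    σ = tensProd (fun a b => ψ a * star (ψ b)) (keyγ ψ σ) := by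
  classical
  set P : Matrix (Idx (Sum.elim κ₁ κ₂)) (Idx (Sum.elim κ₁ κ₂)) ℂ :=
    tensProd (fun a b => ψ a * star (ψ b)) (1 : Matrix (Idx κ₂) (Idx κ₂) ℂ) with hP
  have hP_glue : ∀ (a : Idx κ₁) (c : Idx κ₂) (b : Idx κ₁) (d : Idx κ₂),
      P (glue a c) (glue b d) = ψ a * star (ψ b) * (if c = d then (1:ℂ) else 0) := by
    intro a c b d
    rw [hP]
    show ψ a * star (ψ b) * (1 : Matrix (Idx κ₂) (Idx κ₂) ℂ) c d = _
    rw [Matrix.one_apply]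
  have hPH : Pᴴ = P := by
    apply ext_glue
    intro a c b d
    rw [Matrix.conjTranspose_apply, hP_glue, hP_glue]
    simp only [star_mul', star_star, apply_ite (star : ℂ → ℂ), star_one, star_zero]
    by_cases hcd : c = d
    · rw [if_pos hcd.symm, if_pos hcd]; ring
    · rw [if_neg (fun h => hcd h.symm), if_neg hcd]; ring
  have hPP : P * P = P := by
    apply ext_glue
    intro a c b d
    rw [Matrix.mul_apply, sum_glue (fun w => P (glue a c) w * P w (glue b d)), hP_glue]
    simp only [hP_glue, mul_ite, mul_one, mul_zero, ite_mul, zero_mul,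
      Finset.sum_ite_irrel, Finset.sum_const_zero, Finset.sum_ite_eq, Finset.sum_ite_eq',
      Finset.mem_univ, if_true]
    split
    · rw [show ∑ x, ψ a * star (ψ x) * (ψ x * star (ψ b))
          = (∑ x, ψ x * star (ψ x)) * (ψ a * star (ψ b)) by
        rw [Finset.sum_mul]; exact Finset.sum_congr rfl fun x _ => by ring]
      rw [hψ, one_mul]
    · rfl
  have htrσP : (σ * P).trace = 1 := by
    rw [Matrix.trace]
    simp only [Matrix.diag]
    rw [sum_glue (fun u => (σ * P) u u)]
    have hentry : ∀ (a : Idx κ₁) (c : Idx κ₂),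
        (σ * P) (glue a c) (glue a c) = ∑ b : Idx κ₁, σ (glue a c) (glue b c) * (ψ b * star (ψ a)) := by
      intro a c
      rw [Matrix.mul_apply, sum_glue (fun w => σ (glue a c) w * P w (glue a c))]
      refine Finset.sum_congr rfl fun b _ => ?_
      simp only [hP_glue, mul_ite, mul_one, mul_zero, Finset.sum_ite_eq, Finset.sum_ite_eq',
        Finset.mem_univ, if_true]
    simp only [hentry]
    rw [Finset.sum_comm]
    have : ∀ c? : Unit, True := fun _ => trivial
    calc ∑ c : Idx κ₂, ∑ a : Idx κ₁, ∑ b : Idx κ₁, σ (glue a c) (glue b c) * (ψ b * star (ψ a))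
        = ∑ a : Idx κ₁, ∑ b : Idx κ₁, (∑ c : Idx κ₂, σ (glue a c) (glue b c)) * (ψ b * star (ψ a)) := by
          rw [Finset.sum_comm]
          refine Finset.sum_congr rfl fun a _ => ?_
          rw [Finset.sum_comm]
          exact Finset.sum_congr rfl fun b _ => (Finset.sum_mul _ _ _).symm
      _ = ∑ a : Idx κ₁, ∑ b : Idx κ₁, (ψ a * star (ψ b)) * (ψ b * star (ψ a)) := by
          refine Finset.sum_congr rfl fun a _ => Finset.sum_congr rfl fun b _ => ?_
          rw [show (∑ c : Idx κ₂, σ (glue a c) (glue b c)) = ptrA σ a b from rfl, hA]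
      _ = (∑ a : Idx κ₁, ψ a * star (ψ a)) * (∑ b : Idx κ₁, ψ b * star (ψ b)) := by
          rw [Finset.sum_mul_sum]
          exact Finset.sum_congr rfl fun a _ => Finset.sum_congr rfl fun b _ => by ring
      _ = 1 := by rw [hψ, one_mul]
  obtain ⟨B, hB⟩ := psd_exists hσ
  have hexp : (B * P - B)ᴴ * (B * P - B) = P * σ * P - P * σ - σ * P + σ := by
    calc (B * P - B)ᴴ * (B * P - B) = (P * Bᴴ - Bᴴ) * (B * P - B) := by
          rw [Matrix.conjTranspose_sub, Matrix.conjTranspose_mul, hPH]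
      _ = P * (Bᴴ * B) * P - P * (Bᴴ * B) - (Bᴴ * B) * P + Bᴴ * B := by noncomm_ring
      _ = P * σ * P - P * σ - σ * P + σ := by rw [← hB]
  have htr0 : ((B * P - B)ᴴ * (B * P - B)).trace = 0 := by
    rw [hexp, Matrix.trace_add, Matrix.trace_sub, Matrix.trace_sub]
    have h1 : (P * σ * P).trace = 1 := by
      rw [Matrix.trace_mul_cycle, hPP, Matrix.trace_mul_comm]
      exact htrσP
    have h2 : (P * σ).trace = 1 := by rw [Matrix.trace_mul_comm]; exact htrσP
    rw [h1, h2, htrσP, htr]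
    ring
  have hBP : B * P = B := by
    have h0 := trace_conj_self_eq_zero htr0
    rwa [sub_eq_zero] at h0
  have hσP : σ * P = σ := by
    rw [hB, Matrix.mul_assoc, hBP]
  have hPσ : P * σ = σ := by
    have h1 := congrArg Matrix.conjTranspose hσP
    rwa [Matrix.conjTranspose_mul, hPH, hσ.1.eq] at h1
  have hfin : P * σ * P = tensProd (fun a b => ψ a * star (ψ b)) (keyγ ψ σ) := by
    apply ext_glue
    intro a c b d
    rw [Matrix.mul_apply, sum_glue (fun z => (P * σ) (glue a c) z * P z (glue b d))]
    show _ = ψ a * star (ψ b) * keyγ ψ σ c d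
    have hPσ_entry : ∀ (e : Idx κ₁) (f : Idx κ₂),
        (P * σ) (glue a c) (glue e f) = ∑ x : Idx κ₁, ψ a * star (ψ x) * σ (glue x c) (glue e f) := by
      intro e f
      rw [Matrix.mul_apply, sum_glue (fun w => P (glue a c) w * σ w (glue e f))]
      simp only [hP_glue, ite_mul, mul_ite, one_mul, zero_mul, mul_one, mul_zero,
        Finset.sum_ite_eq, Finset.sum_ite_eq', Finset.mem_univ, if_true]
    simp only [hPσ_entry, hP_glue, mul_ite, mul_one, mul_zero, Finset.sum_ite_eq,
      Finset.sum_ite_eq', Finset.mem_univ, if_true]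
    calc ∑ e : Idx κ₁, (∑ x : Idx κ₁, ψ a * star (ψ x) * σ (glue x c) (glue e d)) * (ψ e * star (ψ b))
        = ∑ x : Idx κ₁, ∑ e : Idx κ₁, (ψ a * star (ψ x) * σ (glue x c) (glue e d)) * (ψ e * star (ψ b)) := by
          rw [Finset.sum_comm]
          exact Finset.sum_congr rfl fun e _ => Finset.sum_mul _ _ _
      _ = ψ a * star (ψ b) * keyγ ψ σ c d := by
          rw [keyγ, Finset.mul_sum]
          refine Finset.sum_congr rfl fun x _ => ?_
          rw [Finset.mul_sum]
          exact Finset.sum_congr rfl fun e _ => by ring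
  rw [← hfin, hPσ, hσP]
end TAux

theorem tensor_additivity_pure_factor {m n : ℕ}
    (κA : Fin m → Type) (κB : Fin n → Type)
    [∀ i, Fintype (κA i)] [∀ i, Fintype (κB i)] (k : ℕ)
    (ψ : Idx κA → ℂ) (hψ : ∑ a, ψ a * star (ψ a) = 1)
    (hαUDA : IsUDA κA k (pureState ψ))
    (β : Matrix (Idx κB) (Idx κB) ℂ) (hβ : IsDensity β)
    (hβUDA : IsUDA κB k β) :
    IsUDA (Sum.elim κA κB) k (tensProd (pureState ψ) β) := by
  classical
  intro σ hσden hmarg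
  have htrα : (pureState ψ).trace = 1 := by
    simpa [Matrix.trace, Matrix.diag, pureState] using hψ
  have hσA_marg : ∀ S : Finset (Fin m), S.card = k →
      ptrace κA S (TAux.ptrA σ) = ptrace κA S (pureState ψ) := by
    intro S hS
    have h1 := hmarg (S.map Function.Embedding.inl) (by rw [Finset.card_map]; exact hS)
    rw [TAux.ptrace_ptrA, h1, ← TAux.ptrace_ptrA, TAux.ptrA_tensProd, hβ.2, one_smul]
  have hσA_den : IsDensity (TAux.ptrA σ) :=
    ⟨TAux.ptrA_posSemidef hσden.1, by rw [TAux.trace_ptrA]; exact hσden.2⟩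
  have hσA : TAux.ptrA σ = pureState ψ := hαUDA _ hσA_den hσA_marg
  have hkey : σ = tensProd (pureState ψ) (TAux.keyγ ψ σ) :=
    TAux.pure_factor ψ hψ hσden.1 hσden.2 hσA
  set γ := TAux.keyγ ψ σ with hγdef
  have hγPSD : γ.PosSemidef := TAux.keyγ_posSemidef ψ hσden.1
  have htrγ : γ.trace = 1 := by
    have h2 := hσden.2
    rw [hkey, TAux.trace_tensProd, htrα, one_mul] at h2
    exact h2
  have e1 : TAux.ptrB σ = γ := by
    rw [hkey, TAux.ptrB_tensProd, htrα, one_smul]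
  have e2 : TAux.ptrB (tensProd (pureState ψ) β) = β := by
    rw [TAux.ptrB_tensProd, htrα, one_smul]
  have hγmarg : ∀ T : Finset (Fin n), T.card = k → ptrace κB T γ = ptrace κB T β := by
    intro T hT
    have h1 := hmarg (T.map Function.Embedding.inr) (by rw [Finset.card_map]; exact hT)
    rw [← e1, TAux.ptrace_ptrB, h1, ← TAux.ptrace_ptrB, e2]
  have hγ : γ = β := hβUDA γ ⟨hγPSD, htrγ⟩ hγmarg
  rw [hkey, hγ]
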